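/- Let $D \subset \mathbb{R}^m$ be open, $F : D \to [-\infty, +\infty]$ locally Lebesgue-integrable, and $d : D \to (0, +\infty)$ continuous with $d(z) < \operatorname{dist}(z, \mathbb{R}^m \setminus D)$ for all $z \in D$. Define $F^{*d}(z) := \frac{1}{\lambda(B(0, d(z)))} \int_{B(z, d(z))} F\, d\lambda$. Then $F^{*d}$ is a real-valued (finite) function on $D$ that is locally integrable on $D$. -/

import Mathlib

open MeasureTheory Metric Filter Topology

/-- For `F` locally integrable on an open set `D ⊆ ℝᵐ` and a continuous radius
function `d` with `0 < d z < dist(z, ∁D)` on `D`, the variable-radius ball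
average `F^{*d}(z) = (1/λ(B(0,d(z)))) ∫_{B(z,d(z))} F dλ` is a (finite)
real-valued function that is locally integrable on `D`. -/
theorem variable_average_locallyIntegrable {m : ℕ}
    (D : Set (EuclideanSpace ℝ (Fin m))) (hD : IsOpen D)
    (F : EuclideanSpace ℝ (Fin m) → ℝ) (hF : LocallyIntegrableOn F D volume)
    (d : EuclideanSpace ℝ (Fin m) → ℝ) (hd : ContinuousOn d D)
    (hd0 : ∀ z ∈ D, 0 < d z) (hdD : ∀ z ∈ D, d z < infDist z Dᶜ) :
    LocallyIntegrableOn
      (fun z => (volume (ball (0 : EuclideanSpace ℝ (Fin m)) (d z))).toReal⁻¹ *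
        ∫ x in ball z (d z), F x) D volume := by
  have vol1pos : 0 < (volume (ball (0 : EuclideanSpace ℝ (Fin m)) 1)).toReal :=
    ENNReal.toReal_pos (measure_ball_pos _ _ one_pos).ne' measure_ball_lt_top.ne
  apply ContinuousOn.locallyIntegrableOn _ hD.measurableSet
  apply continuousOn_of_forall_continuousAt
  intro z₀ hz₀
  have hdz₀ : 0 < d z₀ := hd0 z₀ hz₀
  have hdcont : ContinuousAt d z₀ := (hd z₀ hz₀).continuousAt (hD.mem_nhds hz₀)
  set R := (d z₀ + infDist z₀ Dᶜ) / 2 with hR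
  have hdR : d z₀ < R := by have := hdD z₀ hz₀; rw [hR]; linarith
  have hRinf : R < infDist z₀ Dᶜ := by have := hdD z₀ hz₀; rw [hR]; linarith
  have hKD : closedBall z₀ R ⊆ D := by
    intro x hx
    by_contra hxD
    have h1 : infDist z₀ Dᶜ ≤ dist z₀ x := infDist_le_dist_of_mem hxD
    rw [dist_comm] at h1
    have h2 : dist x z₀ ≤ R := mem_closedBall.mp hx
    linarith
  have hK : IntegrableOn F (closedBall z₀ R) volume :=
    hF.integrableOn_compact_subset hKD (isCompact_closedBall _ _)
  have hball : ∀ᶠ z in 𝓝 z₀, ball z (d z) ⊆ closedBall z₀ R ∧ z ∈ D ∧ 0 < d z := by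
    have hD' : ∀ᶠ z in 𝓝 z₀, z ∈ D := hD.mem_nhds hz₀
    have h1 : ∀ᶠ z in 𝓝 z₀, d z < (d z₀ + R) / 2 :=
      hdcont.eventually (eventually_lt_nhds (by linarith))
    have h2 : ∀ᶠ z in 𝓝 z₀, dist z z₀ < (R - d z₀) / 2 :=
      eventually_nhds_iff.mpr ⟨ball z₀ ((R - d z₀) / 2), fun z hz => mem_ball.mp hz,
        isOpen_ball, mem_ball_self (by linarith)⟩
    filter_upwards [hD', h1, h2] with z hzD hz1 hz2
    refine ⟨fun x hx => ?_, hzD, hd0 z hzD⟩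
    have hx' : dist x z < d z := mem_ball.mp hx
    have : dist x z₀ ≤ dist x z + dist z z₀ := dist_triangle x z z₀
    exact mem_closedBall.mpr (by linarith)
  -- continuity of the normalization factor
  have hcont1 : ContinuousAt (fun z => (volume (ball (0 : EuclideanSpace ℝ (Fin m)) (d z))).toReal⁻¹) z₀ := by
    have hmodel : ContinuousAt
        (fun z => ((d z) ^ (Module.finrank ℝ (EuclideanSpace ℝ (Fin m))) * (volume (ball (0 : EuclideanSpace ℝ (Fin m)) 1)).toReal)⁻¹) z₀ := by
      apply ContinuousAt.inv₀
      · exact (hdcont.pow _).mul continuousAt_const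
      · positivity
    apply hmodel.congr
    filter_upwards [hball] with z ⟨_, hzD, hdz⟩
    rw [Measure.addHaar_ball_of_pos volume 0 hdz, ENNReal.toReal_mul,
      ENNReal.toReal_ofReal (by positivity)]
  -- continuity of the set integral
  have hcont2 : ContinuousAt (fun z => ∫ x in ball z (d z), F x) z₀ := by
    have key : Tendsto (fun z => ∫ x, (ball z (d z)).indicator F x) (𝓝 z₀)
        (𝓝 (∫ x, (ball z₀ (d z₀)).indicator F x)) := by
      apply tendsto_integral_filter_of_dominated_convergence
        ((closedBall z₀ R).indicator fun x => ‖F x‖)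
      · filter_upwards [hball] with z ⟨hsub, _, _⟩
        exact (aestronglyMeasurable_indicator_iff measurableSet_ball).mpr
          ((hK.mono_set hsub).aestronglyMeasurable)
      · filter_upwards [hball] with z ⟨hsub, _, _⟩
        apply Eventually.of_forall
        intro x
        by_cases hx : x ∈ ball z (d z)
        · rw [Set.indicator_of_mem hx, Set.indicator_of_mem (hsub hx)]
        · rw [Set.indicator_of_notMem hx]
          simp only [norm_zero]
          exact Set.indicator_apply_nonneg fun _ => norm_nonneg _
      · exact IntegrableOn.integrable_indicator hK.norm measurableSet_closedBall
      · have hsph : volume (sphere z₀ (d z₀)) = 0 :=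
          Measure.addHaar_sphere_of_ne_zero volume z₀ hdz₀.ne'
        have : ∀ᵐ x : EuclideanSpace ℝ (Fin m), x ∉ sphere z₀ (d z₀) := measure_eq_zero_iff_ae_notMem.mp hsph
        filter_upwards [this] with x hx
        have hx' : dist x z₀ ≠ d z₀ := fun h => hx (mem_sphere.mpr h)
        have hdistc : ContinuousAt (fun z => d z - dist x z) z₀ :=
          hdcont.sub ((continuous_const.dist continuous_id).continuousAt)
        rcases lt_or_gt_of_ne hx' with hlt | hgt
        · -- eventually x ∈ ball z (d z)
          have hev : ∀ᶠ z in 𝓝 z₀, (0 : ℝ) < d z - dist x z :=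
            hdistc.eventually (eventually_gt_nhds (by simpa using sub_pos.mpr hlt))
          have : ∀ᶠ z in 𝓝 z₀,
              (ball z₀ (d z₀)).indicator F x = (ball z (d z)).indicator F x := by
            filter_upwards [hev] with z hz
            rw [Set.indicator_of_mem (mem_ball.mpr hlt),
              Set.indicator_of_mem (mem_ball.mpr (by linarith))]
          exact Tendsto.congr' this tendsto_const_nhds
        · -- eventually x ∉ ball z (d z)
          have hev : ∀ᶠ z in 𝓝 z₀, d z - dist x z < 0 :=
            hdistc.eventually (eventually_lt_nhds (by simpa using sub_neg.mpr hgt))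
          have hx0 : x ∉ ball z₀ (d z₀) := fun h => absurd (mem_ball.mp h) (not_lt.mpr hgt.le)
          have : ∀ᶠ z in 𝓝 z₀,
              (ball z₀ (d z₀)).indicator F x = (ball z (d z)).indicator F x := by
            filter_upwards [hev] with z hz
            rw [Set.indicator_of_notMem hx0,
              Set.indicator_of_notMem (fun h => absurd (mem_ball.mp h) (by linarith))]
          exact Tendsto.congr' this tendsto_const_nhds
    simpa only [ContinuousAt, integral_indicator measurableSet_ball] using key
  exact hcont1.mul hcont2
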